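/- Summed increment estimate on a uniform partition: let E be a real normed vector space, let T > 0, let N be a positive natural number, set Δt = T/N and t_m = m·Δt for m = 0,…,N, and let f : ℝ → E be continuously differentiable on an open set containing [0,T]. Then Δt · ∑_{m=1}^{N} ‖f(t_m) − f(t_{m−1})‖² ≤ (Δt)² · ∫_0^T ‖f'(t)‖² dt. -/

import Mathlib

open MeasureTheory

lemma cs_interval {a b : ℝ} (hab : a ≤ b) {g : ℝ → ℝ} (hg : ContinuousOn g (Set.Icc a b))
    (hnn : ∀ t ∈ Set.Icc a b, 0 ≤ g t) :
    (∫ t in a..b, g t) ^ 2 ≤ (b - a) * ∫ t in a..b, g t ^ 2 := by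
  set μ := volume.restrict (Set.Ioc a b) with hμ
  have hgC : ContinuousOn g (Set.Ioc a b) := hg.mono Set.Ioc_subset_Icc_self
  have hmeas : AEStronglyMeasurable g μ := hgC.aestronglyMeasurable measurableSet_Ioc
  have hsq_int : Integrable (fun t => g t ^ 2) μ :=
    ((hg.pow 2).integrableOn_Icc).mono_set Set.Ioc_subset_Icc_self
  have hg2 : MemLp g 2 μ := (memLp_two_iff_integrable_sq hmeas).2 hsq_int
  have h1 : MemLp (fun _ : ℝ => (1:ℝ)) 2 μ := memLp_const 1
  have hpq : Real.HolderConjugate 2 2 := Real.HolderConjugate.two_two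
  have hofReal : ENNReal.ofReal (2:ℝ) = 2 := by norm_num
  have hnn_ae : 0 ≤ᵐ[μ] g := by
    filter_upwards [ae_restrict_mem measurableSet_Ioc] with t ht
    exact hnn t (Set.Ioc_subset_Icc_self ht)
  have key := integral_mul_le_Lp_mul_Lq_of_nonneg hpq hnn_ae
    (Filter.Eventually.of_forall fun _ => zero_le_one) (hofReal ▸ hg2) (hofReal ▸ h1)
  have hrpow : ∀ x : ℝ, x ^ (2:ℝ) = x ^ 2 := fun x => by
    rw [← Real.rpow_natCast x 2]; norm_num
  have hμuniv : (μ Set.univ).toReal = b - a := by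
    rw [hμ, Measure.restrict_apply_univ, Real.volume_Ioc, ENNReal.toReal_ofReal (by linarith)]
  simp only [mul_one, hrpow, one_pow] at key
  rw [integral_const, smul_eq_mul, mul_one, measureReal_def, hμuniv] at key
  have hA : 0 ≤ ∫ t, g t ^ 2 ∂μ := integral_nonneg fun t => sq_nonneg _
  have hI : 0 ≤ ∫ t, g t ∂μ := integral_nonneg_of_ae hnn_ae
  rw [intervalIntegral.integral_of_le hab, intervalIntegral.integral_of_le hab]
  calc (∫ t in Set.Ioc a b, g t) ^ 2
      ≤ ((∫ t, g t ^ 2 ∂μ) ^ (1/2:ℝ) * (b - a) ^ (1/2:ℝ)) ^ 2 := by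
        apply pow_le_pow_left₀ hI key
    _ = (b - a) * ∫ t in Set.Ioc a b, g t ^ 2 := by
        rw [mul_pow, ← Real.rpow_natCast ((∫ t, g t ^ 2 ∂μ) ^ (1/2:ℝ)) 2,
          ← Real.rpow_natCast ((b-a) ^ (1/2:ℝ)) 2, ← Real.rpow_mul hA,
          ← Real.rpow_mul (by linarith : (0:ℝ) ≤ b - a)]
        norm_num
        ring

/-- Summed increment estimate on a uniform partition. -/
theorem summed_increment_estimate
    {E : Type*} [NormedAddCommGroup E] [NormedSpace ℝ E] [CompleteSpace E]
    (T : ℝ) (hT : 0 < T) (N : ℕ) (hN : 0 < N) (f : ℝ → E) (s : Set ℝ)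
    (hs : IsOpen s) (hsub : Set.Icc 0 T ⊆ s) (hf : ContDiffOn ℝ 1 f s) :
    (T / N) * ∑ m ∈ Finset.Icc 1 N, ‖f (m * (T / N)) - f (((m : ℝ) - 1) * (T / N))‖ ^ 2 ≤
      (T / N) ^ 2 * ∫ t in (0 : ℝ)..T, ‖deriv f t‖ ^ 2 := by
  have hNpos : (0:ℝ) < N := Nat.cast_pos.mpr hN
  set Δ : ℝ := T / N with hΔdef
  have hΔpos : 0 < Δ := div_pos hT hNpos
  have hderiv : ∀ t ∈ s, HasDerivAt f (deriv f t) t := fun t ht =>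
    ((hf.differentiableOn one_ne_zero t ht).differentiableAt (hs.mem_nhds ht)).hasDerivAt
  have hcont : ContinuousOn (deriv f) s := hf.continuousOn_deriv_of_isOpen hs le_rfl
  -- the subinterval [ (m-1)Δ, mΔ ] is inside [0,T] for 1 ≤ m ≤ N
  have hNΔ : (N:ℝ) * Δ = T := by rw [hΔdef]; field_simp
  have hIcc : ∀ m : ℕ, 1 ≤ m → m ≤ N → Set.Icc (((m:ℝ)-1) * Δ) ((m:ℝ) * Δ) ⊆ Set.Icc 0 T := by
    intro m h1 hm t ht
    have hmT : (m:ℝ) * Δ ≤ T := by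
      calc (m:ℝ) * Δ ≤ (N:ℝ) * Δ :=
            mul_le_mul_of_nonneg_right (Nat.cast_le.mpr hm) hΔpos.le
        _ = T := hNΔ
    have h1' : (1:ℝ) ≤ m := by exact_mod_cast h1
    constructor
    · nlinarith [ht.1]
    · linarith [ht.2, hmT]
  have hab : ∀ m : ℕ, ((m:ℝ)-1) * Δ ≤ (m:ℝ) * Δ := fun m => by nlinarith
  -- per-interval estimate
  have step : ∀ m ∈ Finset.Icc 1 N,
      ‖f ((m:ℝ) * Δ) - f (((m:ℝ)-1) * Δ)‖ ^ 2 ≤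
        Δ * ∫ t in (((m:ℝ)-1) * Δ)..((m:ℝ) * Δ), ‖deriv f t‖ ^ 2 := by
    intro m hm
    rw [Finset.mem_Icc] at hm
    set a := ((m:ℝ)-1) * Δ
    set b := (m:ℝ) * Δ
    have hab' : a ≤ b := hab m
    have hsubm : Set.Icc a b ⊆ s := fun t ht => hsub (hIcc m hm.1 hm.2 ht)
    have hcontm : ContinuousOn (deriv f) (Set.Icc a b) := hcont.mono hsubm
    have hint : IntervalIntegrable (deriv f) volume a b := by
      apply ContinuousOn.intervalIntegrable
      rwa [Set.uIcc_of_le hab']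
    have hftc : ∫ t in a..b, deriv f t = f b - f a := by
      apply intervalIntegral.integral_eq_sub_of_hasDerivAt
      · intro t ht
        rw [Set.uIcc_of_le hab'] at ht
        exact hderiv t (hsubm ht)
      · exact hint
    have hnorm : ‖f b - f a‖ ≤ ∫ t in a..b, ‖deriv f t‖ := by
      rw [← hftc]
      exact intervalIntegral.norm_integral_le_integral_norm hab'
    have hcs : (∫ t in a..b, ‖deriv f t‖) ^ 2 ≤ (b - a) * ∫ t in a..b, ‖deriv f t‖ ^ 2 :=
      cs_interval hab' hcontm.norm (fun t _ => norm_nonneg _)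
    have hba : b - a = Δ := by simp only [a, b]; ring
    calc ‖f b - f a‖ ^ 2 ≤ (∫ t in a..b, ‖deriv f t‖) ^ 2 :=
          pow_le_pow_left₀ (norm_nonneg _) hnorm 2
      _ ≤ (b - a) * ∫ t in a..b, ‖deriv f t‖ ^ 2 := hcs
      _ = Δ * ∫ t in a..b, ‖deriv f t‖ ^ 2 := by rw [hba]
  -- summing adjacent interval integrals
  have hsum_int : ∑ m ∈ Finset.Icc 1 N, (∫ t in (((m:ℝ)-1) * Δ)..((m:ℝ) * Δ), ‖deriv f t‖ ^ 2)
      = ∫ t in (0:ℝ)..T, ‖deriv f t‖ ^ 2 := by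
    have hadj : ∀ k < N, IntervalIntegrable (fun t => ‖deriv f t‖ ^ 2) volume
        ((k:ℝ) * Δ) (((k:ℝ)+1) * Δ) := by
      intro k hk
      apply ContinuousOn.intervalIntegrable
      have h1 : Set.uIcc ((k:ℝ) * Δ) (((k:ℝ)+1) * Δ) ⊆ Set.Icc 0 T := by
        rw [Set.uIcc_of_le (by nlinarith)]
        have := hIcc (k+1) (Nat.succ_le_succ (Nat.zero_le k)) hk
        push_cast at this
        simpa using this
      exact ((hcont.mono (fun t ht => hsub (h1 ht))).norm.pow 2)
    have := intervalIntegral.sum_integral_adjacent_intervals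
      (a := fun k : ℕ => (k:ℝ) * Δ) (f := fun t => ‖deriv f t‖ ^ 2) (μ := volume) (n := N) ?_
    · rw [← Finset.Ico_add_one_right_eq_Icc, Finset.sum_Ico_eq_sum_range]
      simp only [Nat.add_sub_cancel]
      have hend : ∫ (x : ℝ) in ((0:ℕ):ℝ)*Δ..((N:ℕ):ℝ)*Δ, ‖deriv f x‖ ^ 2
          = ∫ t in (0:ℝ)..T, ‖deriv f t‖ ^ 2 := by
        norm_num [hNΔ]
      rw [← hend, ← this]
      apply Finset.sum_congr rfl
      intro k _
      congr 1 <;> push_cast <;> ring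
    · intro k hk
      have := hadj k hk
      push_cast
      convert this using 2
  -- conclude
  have hsum_le : ∑ m ∈ Finset.Icc 1 N, ‖f ((m:ℝ) * Δ) - f (((m:ℝ)-1) * Δ)‖ ^ 2
      ≤ Δ * ∫ t in (0:ℝ)..T, ‖deriv f t‖ ^ 2 := by
    calc ∑ m ∈ Finset.Icc 1 N, ‖f ((m:ℝ) * Δ) - f (((m:ℝ)-1) * Δ)‖ ^ 2
        ≤ ∑ m ∈ Finset.Icc 1 N, Δ * ∫ t in (((m:ℝ)-1) * Δ)..((m:ℝ) * Δ), ‖deriv f t‖ ^ 2 :=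
          Finset.sum_le_sum step
      _ = Δ * ∑ m ∈ Finset.Icc 1 N, ∫ t in (((m:ℝ)-1) * Δ)..((m:ℝ) * Δ), ‖deriv f t‖ ^ 2 := by
          rw [Finset.mul_sum]
      _ = Δ * ∫ t in (0:ℝ)..T, ‖deriv f t‖ ^ 2 := by rw [hsum_int]
  calc Δ * ∑ m ∈ Finset.Icc 1 N, ‖f ((m:ℝ) * Δ) - f (((m:ℝ)-1) * Δ)‖ ^ 2
      ≤ Δ * (Δ * ∫ t in (0:ℝ)..T, ‖deriv f t‖ ^ 2) :=
        mul_le_mul_of_nonneg_left hsum_le hΔpos.le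
    _ = Δ ^ 2 * ∫ t in (0:ℝ)..T, ‖deriv f t‖ ^ 2 := by ring
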